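/- Let (X,𝔅,μ,T) be a measure-preserving system and α = {A_1,…,A_k} a finite measurable partition of X. Then for every ε > 0 there exists δ > 0 such that for every measurable partition β = {B_1,…,B_k} of X with ∑_{i=1}^k μ(B_i Δ A_i) < δ, one has D̄_μ(T,β) > D̄_μ(T,α) − ε, and likewise D̲_μ(T,β) > D̲_μ(T,α) − ε. -/

import Mathlib

open MeasureTheory Filter Set
open scoped ENNReal symmDiff

noncomputable section

namespace EntDim

/-- An increasing sequence of positive integers `S = {s 0 < s 1 < ⋯}` (0-indexed,
so `s n` is the `(n+1)`-st element of `S`). -/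
def IsPosSeq (s : ℕ → ℕ) : Prop := StrictMono s ∧ 0 < s 0

/-- `D̄(S,τ) = limsup_n n / (s_n)^τ` (with the convention that the `n`-th term,
for `n` starting at `0`, is `(n+1)/(s n)^τ`, matching the 1-indexed definition). -/
def dimExprSup (s : ℕ → ℕ) (τ : ℝ) : ℝ≥0∞ :=
  Filter.atTop.limsup fun n : ℕ => ((n : ℝ≥0∞) + 1) / (s n : ℝ≥0∞) ^ τ

/-- `D̲(S,τ) = liminf_n n / (s_n)^τ`. -/
def dimExprInf (s : ℕ → ℕ) (τ : ℝ) : ℝ≥0∞ :=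
  Filter.atTop.liminf fun n : ℕ => ((n : ℝ≥0∞) + 1) / (s n : ℝ≥0∞) ^ τ

/-- The upper dimension `D̄(S) = inf {τ ≥ 0 | D̄(S,τ) = 0}` of a sequence. -/
def upperDim (s : ℕ → ℕ) : ℝ := sInf {τ : ℝ | 0 ≤ τ ∧ dimExprSup s τ = 0}

/-- The lower dimension `D̲(S) = inf {τ ≥ 0 | D̲(S,τ) = 0}` of a sequence. -/
def lowerDim (s : ℕ → ℕ) : ℝ := sInf {τ : ℝ | 0 ≤ τ ∧ dimExprInf s τ = 0}

variable {X : Type*} [MeasurableSpace X]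

/-- `P : ι → Set X` is a finite measurable partition of `X`. -/
def IsPartition {ι : Type*} [Fintype ι] (P : ι → Set X) : Prop :=
  (∀ i, MeasurableSet (P i)) ∧ Pairwise (Function.onFun Disjoint P) ∧ (⋃ i, P i) = Set.univ

/-- The entropy `H_μ(⋁_{i ∈ F} T^{-f i} P)` of the join of the preimage partitions
`T^{-f i} P` over a finite index set `F`. -/
def finJoinEnt (μ : Measure X) (T : X → X) {ι : Type*} [Fintype ι] (P : ι → Set X)
    (f : ℕ → ℕ) (F : Finset ℕ) : ℝ :=
  ∑ ω : F → ι, Real.negMulLog (μ (⋂ i : F, T^[f i.1] ⁻¹' (P (ω i)))).toReal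

/-- `H_μ(⋁_{i=1}^{n} T^{-s_i} P)` (with `s` 0-indexed: this is the join over the
first `n` elements of the sequence). -/
def seqJoinEnt (μ : Measure X) (T : X → X) {ι : Type*} [Fintype ι] (P : ι → Set X)
    (s : ℕ → ℕ) (n : ℕ) : ℝ :=
  finJoinEnt μ T P s (Finset.range n)

/-- `S` is an entropy generating sequence of the partition `P`:
`liminf_n (1/n) H_μ(⋁_{i=1}^n T^{-s_i} P) > 0`. -/
def IsEntGenSeq (μ : Measure X) (T : X → X) {ι : Type*} [Fintype ι] (P : ι → Set X)
    (s : ℕ → ℕ) : Prop :=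
  IsPosSeq s ∧ 0 < Filter.atTop.liminf fun n : ℕ => seqJoinEnt μ T P s n / n

/-- `S` is a positive entropy sequence of the partition `P`:
`limsup_n (1/n) H_μ(⋁_{i=1}^n T^{-s_i} P) > 0`. -/
def IsPosEntSeq (μ : Measure X) (T : X → X) {ι : Type*} [Fintype ι] (P : ι → Set X)
    (s : ℕ → ℕ) : Prop :=
  IsPosSeq s ∧ 0 < Filter.atTop.limsup fun n : ℕ => seqJoinEnt μ T P s n / n

/-- `D̄^e_μ(T,P)`: the supremum of upper dimensions over entropy generating sequences
of `P` (`0`, by convention `sSup ∅ = 0`, if there are none). This is the upper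
entropy dimension `D̄_μ(T,P)` of the partition `P`. -/
def upperEntDimPart (μ : Measure X) (T : X → X) {ι : Type*} [Fintype ι]
    (P : ι → Set X) : ℝ :=
  sSup {d : ℝ | ∃ s : ℕ → ℕ, IsEntGenSeq μ T P s ∧ d = upperDim s}

/-- `D̲^e_μ(T,P)`: the supremum of lower dimensions over entropy generating sequences,
i.e. the lower entropy dimension `D̲_μ(T,P)` of the partition `P`. -/
def lowerEntDimPart (μ : Measure X) (T : X → X) {ι : Type*} [Fintype ι]
    (P : ι → Set X) : ℝ :=
  sSup {d : ℝ | ∃ s : ℕ → ℕ, IsEntGenSeq μ T P s ∧ d = lowerDim s}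

/-- `D̄^p_μ(T,P)`: the supremum of upper dimensions over positive entropy sequences of `P`. -/
def upperPosDimPart (μ : Measure X) (T : X → X) {ι : Type*} [Fintype ι]
    (P : ι → Set X) : ℝ :=
  sSup {d : ℝ | ∃ s : ℕ → ℕ, IsPosEntSeq μ T P s ∧ d = upperDim s}

/-- `D̲^p_μ(T,P)`: the supremum of lower dimensions over positive entropy sequences of `P`. -/
def lowerPosDimPart (μ : Measure X) (T : X → X) {ι : Type*} [Fintype ι]
    (P : ι → Set X) : ℝ :=
  sSup {d : ℝ | ∃ s : ℕ → ℕ, IsPosEntSeq μ T P s ∧ d = lowerDim s}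

/-- The upper metric entropy dimension `D̄_μ(X,T)`: the supremum of `D̄_μ(T,P)`
over all finite measurable partitions `P` of `X`. -/
def upperEntDim (μ : Measure X) (T : X → X) : ℝ :=
  sSup {d : ℝ | ∃ (k : ℕ) (P : Fin k → Set X), IsPartition P ∧ d = upperEntDimPart μ T P}

/-- The lower metric entropy dimension `D̲_μ(X,T)`. -/
def lowerEntDim (μ : Measure X) (T : X → X) : ℝ :=
  sSup {d : ℝ | ∃ (k : ℕ) (P : Fin k → Set X), IsPartition P ∧ d = lowerEntDimPart μ T P}

/-- `D̄^p_μ(X,T)`: the supremum of `D̄^p_μ(T,P)` over all finite measurable partitions. -/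
def upperPosDim (μ : Measure X) (T : X → X) : ℝ :=
  sSup {d : ℝ | ∃ (k : ℕ) (P : Fin k → Set X), IsPartition P ∧ d = upperPosDimPart μ T P}

/-- The two-set partition `{A, X \ A}`. -/
def pairPart (A : Set X) : Fin 2 → Set X := ![A, Aᶜ]

/-- The dimension set `Dims_μ(X,T) = {D̄_μ(T,{A,Aᶜ}) : A ∈ 𝔅, 0 < μ(A) < 1}`. -/
def dimsSet (μ : Measure X) (T : X → X) : Set ℝ :=
  {d : ℝ | ∃ A : Set X, MeasurableSet A ∧ 0 < μ A ∧ μ A < 1 ∧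
    d = upperEntDimPart μ T (pairPart A)}

/-- The system is null: every sequence entropy (along any increasing sequence of
positive integers, for any finite measurable partition) vanishes. -/
def IsNullSystem (μ : Measure X) (T : X → X) : Prop :=
  ∀ (k : ℕ) (P : Fin k → Set X), IsPartition P → ∀ s : ℕ → ℕ, IsPosSeq s →
    Filter.atTop.limsup (fun n : ℕ => seqJoinEnt μ T P s n / n) = 0

end EntDim
namespace EntDim

section Aux

lemma negMulLog_add_le {a b : ℝ} (ha : 0 ≤ a) (hb : 0 ≤ b) :
    Real.negMulLog (a + b) ≤ Real.negMulLog a + Real.negMulLog b := by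
  rcases eq_or_lt_of_le ha with h | h
  · simp [← h]
  rcases eq_or_lt_of_le hb with h' | h'
  · simp [← h']
  have h1 : a * Real.log a ≤ a * Real.log (a + b) :=
    mul_le_mul_of_nonneg_left (Real.log_le_log h (by linarith)) ha
  have h2 : b * Real.log b ≤ b * Real.log (a + b) :=
    mul_le_mul_of_nonneg_left (Real.log_le_log h' (by linarith)) hb
  simp only [Real.negMulLog]
  nlinarith

lemma negMulLog_sum_le {κ : Type*} (s : Finset κ) (g : κ → ℝ) (hg : ∀ k ∈ s, 0 ≤ g k) :
    Real.negMulLog (∑ k ∈ s, g k) ≤ ∑ k ∈ s, Real.negMulLog (g k) := by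
  classical
  induction s using Finset.induction with
  | empty => simp [Real.negMulLog]
  | @insert x s hx ih =>
    rw [Finset.sum_insert hx, Finset.sum_insert hx]
    calc Real.negMulLog (g x + ∑ k ∈ s, g k)
        ≤ Real.negMulLog (g x) + Real.negMulLog (∑ k ∈ s, g k) :=
          negMulLog_add_le (hg x (Finset.mem_insert_self x s))
            (Finset.sum_nonneg fun k hk => hg k (Finset.mem_insert_of_mem hk))
      _ ≤ _ := by
          gcongr -- might fail; fallback
          exact ih fun k hk => hg k (Finset.mem_insert_of_mem hk)

lemma gibbs {κ : Type*} [Fintype κ] (p q : κ → ℝ) (hp : ∀ k, 0 ≤ p k) (hq : ∀ k, 0 ≤ q k)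
    (hpq : ∀ k, q k = 0 → p k = 0) (hsum : ∑ k, q k ≤ ∑ k, p k) :
    ∑ k, Real.negMulLog (p k) ≤ -∑ k, p k * Real.log (q k) := by
  have key : ∀ k, Real.negMulLog (p k) + p k * Real.log (q k) ≤ q k - p k := by
    intro k
    rcases eq_or_lt_of_le (hp k) with h | h
    · simp [← h, Real.negMulLog, hq k]
    · have hq0 : 0 < q k := by
        rcases eq_or_lt_of_le (hq k) with h' | h'
        · exact absurd (hpq k h'.symm) (by linarith)
        · exact h'
      have hl : Real.log (q k / p k) ≤ q k / p k - 1 := Real.log_le_sub_one_of_pos (by positivity)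
      rw [Real.log_div hq0.ne' h.ne'] at hl
      have h2 := mul_le_mul_of_nonneg_left hl h.le
      have hpq' : p k * (q k / p k - 1) = q k - p k := by field_simp
      rw [hpq'] at h2
      simp only [Real.negMulLog]
      nlinarith
  have hsum2 := Finset.sum_le_sum fun k (_ : k ∈ Finset.univ) => key k
  rw [Finset.sum_add_distrib, Finset.sum_sub_distrib] at hsum2
  linarith

end Aux
end EntDim
namespace EntDim
section Aux2
variable {X : Type*} [MeasurableSpace X]

lemma IsPartition.preimage {ι : Type*} [Fintype ι] {P : ι → Set X} (hP : IsPartition P)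
    {g : X → X} (hg : Measurable g) : IsPartition (fun i => g ⁻¹' P i) := by
  refine ⟨fun i => hg (hP.1 i), fun i j hij => (hP.2.1 hij).preimage g, ?_⟩
  rw [← Set.preimage_iUnion, hP.2.2, Set.preimage_univ]

lemma IsPartition.inter {ι ι' : Type*} [Fintype ι] [Fintype ι'] {P : ι → Set X} {Q : ι' → Set X}
    (hP : IsPartition P) (hQ : IsPartition Q) :
    IsPartition (fun ab : ι × ι' => P ab.1 ∩ Q ab.2) := by
  refine ⟨fun ab => (hP.1 ab.1).inter (hQ.1 ab.2), ?_, ?_⟩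
  · rintro ⟨a, b⟩ ⟨a', b'⟩ hne
    have h : a ≠ a' ∨ b ≠ b' := by
      by_contra h; push_neg at h; exact hne (Prod.ext h.1 h.2)
    rcases h with h | h
    · exact ((hP.2.1 h).mono Set.inter_subset_left Set.inter_subset_left)
    · exact ((hQ.2.1 h).mono Set.inter_subset_right Set.inter_subset_right)
  · ext x
    simp only [Set.mem_iUnion, Set.mem_univ, iff_true, Set.mem_inter_iff]
    have hx1 : x ∈ ⋃ i, P i := hP.2.2 ▸ Set.mem_univ x
    have hx2 : x ∈ ⋃ j, Q j := hQ.2.2 ▸ Set.mem_univ x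
    obtain ⟨a, ha⟩ := Set.mem_iUnion.1 hx1
    obtain ⟨b, hb⟩ := Set.mem_iUnion.1 hx2
    exact ⟨(a, b), ha, hb⟩

lemma IsPartition.pi {J : Type*} [Fintype J] [DecidableEq J] {κ : J → Type*} [∀ j, Fintype (κ j)]
    {A : ∀ j, κ j → Set X} (hA : ∀ j, IsPartition (A j)) :
    IsPartition (fun ω : ∀ j, κ j => ⋂ j, A j (ω j)) := by
  refine ⟨fun ω => MeasurableSet.iInter fun j => (hA j).1 (ω j), ?_, ?_⟩
  · intro ω ω' hne
    have h : ∃ j, ω j ≠ ω' j := by by_contra h; push_neg at h; exact hne (funext h)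
    obtain ⟨j, hj⟩ := h
    exact (((hA j).2.1 hj).mono (Set.iInter_subset _ j) (Set.iInter_subset _ j))
  · ext x
    simp only [Set.mem_iUnion, Set.mem_iInter, Set.mem_univ, iff_true]
    have h : ∀ j, ∃ a, x ∈ A j a := fun j =>
      Set.mem_iUnion.1 ((hA j).2.2 ▸ Set.mem_univ x)
    choose ω hω using h
    exact ⟨ω, hω⟩

lemma IsPartition.comp_equiv {ι κ : Type*} [Fintype ι] [Fintype κ] {R : ι → Set X}
    (hR : IsPartition R) (e : κ ≃ ι) : IsPartition (fun k => R (e k)) := by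
  refine ⟨fun k => hR.1 _, fun k k' hne => hR.2.1 fun h => hne (e.injective h), ?_⟩
  rw [← hR.2.2]
  exact e.surjective.iUnion_comp _

lemma IsPartition.sum_measure_inter {ι : Type*} [Fintype ι] {R : ι → Set X}
    (hR : IsPartition R) (μ : Measure X) {B : Set X} (hB : MeasurableSet B) :
    ∑ i, μ (B ∩ R i) = μ B := by
  have h1 : Pairwise (Function.onFun Disjoint fun i => B ∩ R i) := fun i j hij =>
    (hR.2.1 hij).mono Set.inter_subset_right Set.inter_subset_right
  have h2 := measure_iUnion (μ := μ) h1 fun i => hB.inter (hR.1 i)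
  rw [tsum_fintype] at h2
  rw [← h2, ← Set.inter_iUnion, hR.2.2, Set.inter_univ]

lemma IsPartition.sum_toReal_measure_inter {ι : Type*} [Fintype ι] {R : ι → Set X}
    (hR : IsPartition R) (μ : Measure X) [IsFiniteMeasure μ] {B : Set X}
    (hB : MeasurableSet B) :
    ∑ i, (μ (B ∩ R i)).toReal = (μ B).toReal := by
  rw [← ENNReal.toReal_sum fun a _ => measure_ne_top μ _, hR.sum_measure_inter μ hB]

lemma IsPartition.nonempty_index {ι : Type*} [Fintype ι] {P : ι → Set X} (hP : IsPartition P)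
    (μ : Measure X) [IsProbabilityMeasure μ] : Nonempty ι := by
  by_contra h
  rw [not_nonempty_iff] at h
  have h2 : (Set.univ : Set X) = ∅ := by rw [← hP.2.2]; exact Set.iUnion_of_empty _
  have h3 : (1 : ℝ≥0∞) = 0 := by rw [← measure_univ (μ := μ), h2, measure_empty]
  simp at h3

end Aux2
end EntDim
namespace EntDim
section Aux3

lemma IsPosSeq.add_one_le {s : ℕ → ℕ} (hs : IsPosSeq s) (n : ℕ) : n + 1 ≤ s n := by
  induction n with
  | zero => exact hs.2
  | succ n ih => have h2 : s n < s (n + 1) := hs.1 (by omega); omega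

lemma tendsto_dim_two {s : ℕ → ℕ} (hs : IsPosSeq s) :
    Filter.Tendsto (fun n : ℕ => ((n : ℝ≥0∞) + 1) / (s n : ℝ≥0∞) ^ (2 : ℝ)) Filter.atTop
      (nhds 0) := by
  have hb : ∀ n : ℕ, ((n : ℝ≥0∞) + 1) / (s n : ℝ≥0∞) ^ (2 : ℝ) ≤ ((n : ℝ≥0∞) + 1)⁻¹ := by
    intro n
    have h1 : ((n : ℝ≥0∞) + 1) ≤ (s n : ℝ≥0∞) := by
      have := hs.add_one_le n
      exact_mod_cast (by exact_mod_cast this : ((n + 1 : ℕ) : ℝ≥0∞) ≤ (s n : ℝ≥0∞))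
    have h2 : ((n : ℝ≥0∞) + 1) ^ (2 : ℝ) ≤ (s n : ℝ≥0∞) ^ (2 : ℝ) :=
      ENNReal.rpow_le_rpow h1 (by norm_num)
    have h3 : ((n : ℝ≥0∞) + 1) / (s n : ℝ≥0∞) ^ (2 : ℝ) ≤
        ((n : ℝ≥0∞) + 1) / ((n : ℝ≥0∞) + 1) ^ (2 : ℝ) :=
      ENNReal.div_le_div le_rfl h2
    refine h3.trans (le_of_eq ?_)
    have ha : ((n : ℝ≥0∞) + 1) ≠ 0 := by simp
    have ha' : ((n : ℝ≥0∞) + 1) ≠ ⊤ := by simp [ENNReal.add_ne_top]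
    have h4 : ((n : ℝ≥0∞) + 1) ^ (2 : ℝ) = ((n : ℝ≥0∞) + 1) * ((n : ℝ≥0∞) + 1) := by
      rw [show (2 : ℝ) = ((2 : ℕ) : ℝ) by norm_num, ENNReal.rpow_natCast, sq]
    rw [h4]
    calc ((n : ℝ≥0∞) + 1) / (((n : ℝ≥0∞) + 1) * ((n : ℝ≥0∞) + 1))
        = ((n : ℝ≥0∞) + 1) * 1 / (((n : ℝ≥0∞) + 1) * ((n : ℝ≥0∞) + 1)) := by rw [mul_one]
      _ = 1 / ((n : ℝ≥0∞) + 1) := ENNReal.mul_div_mul_left 1 _ ha ha'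
      _ = ((n : ℝ≥0∞) + 1)⁻¹ := one_div _
  have htop : Filter.Tendsto (fun n : ℕ => ((n : ℝ≥0∞) + 1)⁻¹) Filter.atTop (nhds 0) := by
    have h5 : (fun n : ℕ => ((n : ℝ≥0∞) + 1)⁻¹) =
        (fun m : ℕ => (m : ℝ≥0∞)⁻¹) ∘ (fun n : ℕ => n + 1) := by
      funext n; simp [Function.comp]
    rw [h5]
    exact ENNReal.tendsto_inv_nat_nhds_zero.comp (Filter.tendsto_add_atTop_nat 1)
  exact tendsto_of_tendsto_of_tendsto_of_le_of_le tendsto_const_nhds htop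
    (fun n => zero_le) hb

lemma dimExprSup_two {s : ℕ → ℕ} (hs : IsPosSeq s) : dimExprSup s 2 = 0 :=
  (tendsto_dim_two hs).limsup_eq

lemma dimExprInf_two {s : ℕ → ℕ} (hs : IsPosSeq s) : dimExprInf s 2 = 0 :=
  (tendsto_dim_two hs).liminf_eq

lemma upperDim_nonneg (s : ℕ → ℕ) : 0 ≤ upperDim s :=
  Real.sInf_nonneg fun _ hτ => hτ.1

lemma lowerDim_nonneg (s : ℕ → ℕ) : 0 ≤ lowerDim s :=
  Real.sInf_nonneg fun _ hτ => hτ.1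

lemma upperDim_le_two {s : ℕ → ℕ} (hs : IsPosSeq s) : upperDim s ≤ 2 :=
  csInf_le ⟨0, fun _ hτ => hτ.1⟩ ⟨by norm_num, dimExprSup_two hs⟩

lemma lowerDim_le_two {s : ℕ → ℕ} (hs : IsPosSeq s) : lowerDim s ≤ 2 :=
  csInf_le ⟨0, fun _ hτ => hτ.1⟩ ⟨by norm_num, dimExprInf_two hs⟩

end Aux3
end EntDim
namespace EntDim
section Aux4
variable {X : Type*} [MeasurableSpace X]

/-- Conditional entropy `H_μ(P | Q)` of two indexed partitions. -/
def condEnt (μ : Measure X) {ι : Type*} [Fintype ι] (P Q : ι → Set X) : ℝ :=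
  (∑ a : ι, ∑ b : ι, Real.negMulLog (μ (P a ∩ Q b)).toReal) -
    ∑ b : ι, Real.negMulLog (μ (Q b)).toReal

lemma condEnt_small {ι : Type*} [Fintype ι] [DecidableEq ι] (μ : Measure X)
    [IsProbabilityMeasure μ] {P : ι → Set X} (hP : IsPartition P) {c : ℝ} (hc : 0 < c) :
    ∃ δ : ℝ, 0 < δ ∧ ∀ Q : ι → Set X, IsPartition Q →
      (∑ i, (μ (Q i ∆ P i)).toReal) < δ → condEnt μ P Q < c := by
  classical
  set g : (ι × ι → ℝ) → ℝ := fun m =>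
    (∑ ab : ι × ι, Real.negMulLog (m ab)) - ∑ b : ι, Real.negMulLog (∑ a : ι, m (a, b))
    with hgdef
  have hcont : Continuous g := by
    apply Continuous.sub
    · exact continuous_finset_sum _ fun ab _ => Real.continuous_negMulLog.comp
        (continuous_apply ab)
    · exact continuous_finset_sum _ fun b _ => Real.continuous_negMulLog.comp
        (continuous_finset_sum _ fun a _ => continuous_apply (a, b))
  set m₀ : ι × ι → ℝ := fun ab => if ab.1 = ab.2 then (μ (P ab.1)).toReal else 0 with hm₀
  have hg0 : g m₀ = 0 := by
    have h1 : (∑ ab : ι × ι, Real.negMulLog (m₀ ab)) = ∑ a : ι, Real.negMulLog (μ (P a)).toReal := by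
      rw [Fintype.sum_prod_type]
      refine Finset.sum_congr rfl fun a _ => ?_
      rw [show (∑ b : ι, Real.negMulLog (m₀ (a, b))) =
          ∑ b : ι, if a = b then Real.negMulLog (μ (P a)).toReal else 0 from
        Finset.sum_congr rfl fun b _ => by by_cases h : a = b <;> simp [hm₀, h]]
      simp
    have h2 : ∀ b : ι, (∑ a : ι, m₀ (a, b)) = (μ (P b)).toReal := by
      intro b
      rw [show (∑ a : ι, m₀ (a, b)) = ∑ a : ι, if a = b then (μ (P b)).toReal else 0 from
        Finset.sum_congr rfl fun a _ => by by_cases h : a = b <;> simp [hm₀, h]]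
      simp
    simp only [hgdef, h1]
    rw [show (∑ b : ι, Real.negMulLog (∑ a : ι, m₀ (a, b))) =
      ∑ b : ι, Real.negMulLog (μ (P b)).toReal from
      Finset.sum_congr rfl fun b _ => by rw [h2 b]]
    ring
  obtain ⟨δ, hδ, hball⟩ := Metric.continuousAt_iff.1 (hcont.continuousAt (x := m₀)) c hc
  refine ⟨δ, hδ, fun Q hQ hclose => ?_⟩
  set m : ι × ι → ℝ := fun ab => (μ (P ab.1 ∩ Q ab.2)).toReal with hm
  have htot : (0:ℝ) ≤ ∑ i, (μ (Q i ∆ P i)).toReal :=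
    Finset.sum_nonneg fun i _ => ENNReal.toReal_nonneg
  have hdist : dist m m₀ < δ := by
    rw [dist_pi_lt_iff hδ]
    intro ab
    obtain ⟨a, b⟩ := ab
    rw [Real.dist_eq]
    have hle : |m (a, b) - m₀ (a, b)| ≤ ∑ i, (μ (Q i ∆ P i)).toReal := by
      by_cases hab : a = b
      · subst hab
        simp only [hm, hm₀, if_pos rfl]
        have key : (μ (P a ∩ Q a)).toReal + (μ (P a \ Q a)).toReal = (μ (P a)).toReal := by
          rw [← ENNReal.toReal_add (measure_ne_top μ _) (measure_ne_top μ _),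
            measure_inter_add_diff _ (hQ.1 a)]
        have hsub : P a \ Q a ⊆ Q a ∆ P a := by
          intro x hx
          simp only [Set.mem_symmDiff]
          exact Or.inr ⟨hx.1, hx.2⟩
        have h5 : (μ (P a \ Q a)).toReal ≤ (μ (Q a ∆ P a)).toReal :=
          ENNReal.toReal_mono (measure_ne_top μ _) (measure_mono hsub)
        have h6 : (μ (Q a ∆ P a)).toReal ≤ ∑ i, (μ (Q i ∆ P i)).toReal :=
          Finset.single_le_sum (f := fun i => (μ (Q i ∆ P i)).toReal)
            (fun i _ => ENNReal.toReal_nonneg) (Finset.mem_univ a)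
        have h7 : (0:ℝ) ≤ (μ (P a \ Q a)).toReal := ENNReal.toReal_nonneg
        rw [abs_sub_comm, abs_of_nonneg (by linarith :
          (0:ℝ) ≤ (μ (P a)).toReal - (μ (P a ∩ Q a)).toReal)]
        linarith
      · simp only [hm, hm₀, if_neg hab, sub_zero]
        have hsub : P a ∩ Q b ⊆ Q b ∆ P b := by
          intro x hx
          simp only [Set.mem_symmDiff]
          exact Or.inl ⟨hx.2, fun hxb => (hP.2.1 hab).le_bot ⟨hx.1, hxb⟩⟩
        have h5 : (μ (P a ∩ Q b)).toReal ≤ (μ (Q b ∆ P b)).toReal :=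
          ENNReal.toReal_mono (measure_ne_top μ _) (measure_mono hsub)
        have h6 : (μ (Q b ∆ P b)).toReal ≤ ∑ i, (μ (Q i ∆ P i)).toReal :=
          Finset.single_le_sum (f := fun i => (μ (Q i ∆ P i)).toReal)
            (fun i _ => ENNReal.toReal_nonneg) (Finset.mem_univ b)
        rw [abs_of_nonneg ENNReal.toReal_nonneg]
        linarith
    exact lt_of_le_of_lt hle hclose
  have hgm : |g m| < c := by
    have := hball hdist
    rwa [hg0, Real.dist_eq, sub_zero] at this
  have hcond : condEnt μ P Q = g m := by
    simp only [condEnt, hgdef]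
    congr 1
    · rw [Fintype.sum_prod_type]
    · refine Finset.sum_congr rfl fun b _ => ?_
      congr 1
      have := hP.sum_toReal_measure_inter μ (hQ.1 b)
      rw [← this]
      exact Finset.sum_congr rfl fun a _ => by rw [Set.inter_comm]
  rw [hcond]
  exact lt_of_le_of_lt (le_abs_self _) hgm

end Aux4
end EntDim
namespace EntDim
section Aux5
variable {X : Type*} [MeasurableSpace X]

lemma finJoinEnt_le_add {ι : Type*} [Fintype ι] (μ : Measure X) [IsProbabilityMeasure μ]
    {T : X → X} (hT : MeasurePreserving T μ μ) {P Q : ι → Set X}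
    (hP : IsPartition P) (hQ : IsPartition Q) (f : ℕ → ℕ) (F : Finset ℕ) :
    finJoinEnt μ T P f F ≤ finJoinEnt μ T Q f F + F.card * condEnt μ P Q := by
  classical
  set J := {x // x ∈ F}
  set g : J → X → X := fun i => T^[f i.1] with hgdef
  have hgm : ∀ i : J, Measurable (g i) := fun i => (hT.iterate (f i.1)).measurable
  have hgp : ∀ i : J, MeasurePreserving (g i) μ μ := fun i => hT.iterate (f i.1)
  -- partitions
  have hPP : ∀ i : J, IsPartition fun a : ι => g i ⁻¹' P a := fun i => hP.preimage (hgm i)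
  have hQQ : ∀ i : J, IsPartition fun a : ι => g i ⁻¹' Q a := fun i => hQ.preimage (hgm i)
  have hRR : ∀ i : J, IsPartition fun ab : ι × ι => g i ⁻¹' (P ab.1 ∩ Q ab.2) :=
    fun i => (hP.inter hQ).preimage (hgm i)
  have hPJ : IsPartition fun ω : J → ι => ⋂ i : J, g i ⁻¹' P (ω i) := IsPartition.pi hPP
  have hQJ : IsPartition fun η : J → ι => ⋂ i : J, g i ⁻¹' Q (η i) := IsPartition.pi hQQ
  have hRJ0 : IsPartition fun χ : J → ι × ι => ⋂ i : J, g i ⁻¹' (P (χ i).1 ∩ Q (χ i).2) :=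
    IsPartition.pi hRR
  have hRJ : IsPartition fun w : (J → ι) × (J → ι) =>
      ⋂ i : J, g i ⁻¹' (P (w.1 i) ∩ Q (w.2 i)) :=
    hRJ0.comp_equiv (Equiv.arrowProdEquivProdArrow J (fun _ => ι) (fun _ => ι)).symm
  -- real-valued quantities
  set p : (J → ι) × (J → ι) → ℝ :=
    fun w => (μ (⋂ i : J, g i ⁻¹' (P (w.1 i) ∩ Q (w.2 i)))).toReal with hpdef
  set tq : (J → ι) → ℝ := fun η => (μ (⋂ i : J, g i ⁻¹' Q (η i))).toReal with htqdef
  set tb : ι → ℝ := fun b => (μ (Q b)).toReal with htbdef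
  set mm : ι × ι → ℝ := fun ab => (μ (P ab.1 ∩ Q ab.2)).toReal with hmmdef
  set r : ι → ι → ℝ := fun a b => if tb b = 0 then 1 else mm (a, b) / tb b with hrdef
  set q : (J → ι) × (J → ι) → ℝ := fun w => tq w.2 * ∏ i : J, r (w.1 i) (w.2 i) with hqdef
  -- basic facts
  have hmeasPQ : ∀ ab : ι × ι, MeasurableSet (P ab.1 ∩ Q ab.2) :=
    fun ab => (hP.1 ab.1).inter (hQ.1 ab.2)
  have hm_eq : ∀ (i : J) (ab : ι × ι), μ (g i ⁻¹' (P ab.1 ∩ Q ab.2)) = μ (P ab.1 ∩ Q ab.2) :=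
    fun i ab => (hgp i).measure_preimage (hmeasPQ ab).nullMeasurableSet
  have htb_eq : ∀ (i : J) (b : ι), μ (g i ⁻¹' Q b) = μ (Q b) :=
    fun i b => (hgp i).measure_preimage (hQ.1 b).nullMeasurableSet
  have hp0 : ∀ w, 0 ≤ p w := fun w => ENNReal.toReal_nonneg
  have hr0 : ∀ a b, 0 ≤ r a b := by
    intro a b
    simp only [hrdef]
    split
    · norm_num
    · exact div_nonneg ENNReal.toReal_nonneg ENNReal.toReal_nonneg
  have hq0 : ∀ w, 0 ≤ q w :=
    fun w => mul_nonneg ENNReal.toReal_nonneg (Finset.prod_nonneg fun i _ => hr0 _ _)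
  -- p w ≤ mm of any coordinate
  have hp_le_mm : ∀ (w : (J → ι) × (J → ι)) (i : J), p w ≤ mm (w.1 i, w.2 i) := by
    intro w i
    have h1 : (⋂ i : J, g i ⁻¹' (P (w.1 i) ∩ Q (w.2 i))) ⊆ g i ⁻¹' (P (w.1 i) ∩ Q (w.2 i)) :=
      Set.iInter_subset _ i
    calc p w ≤ (μ (g i ⁻¹' (P (w.1 i) ∩ Q (w.2 i)))).toReal :=
          ENNReal.toReal_mono (measure_ne_top μ _) (measure_mono h1)
      _ = mm (w.1 i, w.2 i) := by rw [hm_eq i (w.1 i, w.2 i)]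
  have hp_le_tq : ∀ w : (J → ι) × (J → ι), p w ≤ tq w.2 := by
    intro w
    refine ENNReal.toReal_mono (measure_ne_top μ _) (measure_mono ?_)
    exact Set.iInter_mono fun i => Set.preimage_mono Set.inter_subset_right
  have htq_le_tb : ∀ (η : J → ι) (i : J), tq η ≤ tb (η i) := by
    intro η i
    have h1 : (⋂ i : J, g i ⁻¹' Q (η i)) ⊆ g i ⁻¹' Q (η i) := Set.iInter_subset _ i
    calc tq η ≤ (μ (g i ⁻¹' Q (η i))).toReal :=
          ENNReal.toReal_mono (measure_ne_top μ _) (measure_mono h1)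
      _ = tb (η i) := by rw [htb_eq i (η i)]
  have hq_zero : ∀ w, q w = 0 → p w = 0 := by
    intro w hw
    rcases mul_eq_zero.1 hw with h | h
    · exact le_antisymm (h ▸ hp_le_tq w) (hp0 w)
    · obtain ⟨i, _, hi⟩ := Finset.prod_eq_zero_iff.1 h
      have hmm0 : mm (w.1 i, w.2 i) = 0 := by
        by_cases htb0 : tb (w.2 i) = 0
        · simp only [hrdef, if_pos htb0] at hi; norm_num at hi
        · simp only [hrdef, if_neg htb0] at hi
          rcases div_eq_zero_iff.1 hi with h' | h'
          · exact h'
          · exact absurd h' htb0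
      exact le_antisymm (hmm0 ▸ hp_le_mm w i) (hp0 w)
  -- sum of p equals 1
  have hsum_p : ∑ w, p w = 1 := by
    have := hRJ.sum_toReal_measure_inter μ MeasurableSet.univ
    simp only [Set.univ_inter, measure_univ, ENNReal.toReal_one] at this
    exact this
  -- sum over a of mm (a, b) = tb b
  have hmm_sum : ∀ b : ι, ∑ a : ι, mm (a, b) = tb b := by
    intro b
    have h := hP.sum_toReal_measure_inter μ (hQ.1 b)
    simp only [hmmdef, htbdef]
    rw [← h]
    exact Finset.sum_congr rfl fun a _ => by rw [Set.inter_comm]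
  have hr_sum : ∀ b : ι, tb b ≠ 0 → ∑ a : ι, r a b = 1 := by
    intro b hb
    rw [show (∑ a : ι, r a b) = ∑ a : ι, mm (a, b) / tb b from
      Finset.sum_congr rfl fun a _ => by simp [hrdef, if_neg hb]]
    rw [← Finset.sum_div, hmm_sum b, div_self hb]
  -- sum of tq equals 1
  have hsum_tq : ∑ η, tq η = 1 := by
    have := hQJ.sum_toReal_measure_inter μ MeasurableSet.univ
    simp only [Set.univ_inter, measure_univ, ENNReal.toReal_one] at this
    exact this
  -- sum of q equals 1
  have hsum_q : ∑ w, q w = 1 := by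
    rw [Fintype.sum_prod_type_right]
    have hinner : ∀ η : J → ι, (∑ ω : J → ι, q (ω, η)) = tq η := by
      intro η
      simp only [hqdef]
      rw [← Finset.mul_sum]
      by_cases h : tq η = 0
      · simp [h]
      · have hprod : (∑ ω : J → ι, ∏ i : J, r (ω i) (η i)) = ∏ i : J, ∑ a : ι, r a (η i) := by
          rw [Finset.prod_univ_sum]
          simp [Fintype.piFinset_univ]
        rw [hprod]
        have : ∀ i : J, (∑ a : ι, r a (η i)) = 1 := by
          intro i
          refine hr_sum (η i) fun hb => h ?_
          have := htq_le_tb η i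
          have h0 : (0:ℝ) ≤ tq η := ENNReal.toReal_nonneg
          linarith [hb ▸ this]
        rw [Finset.prod_congr rfl fun i _ => this i, Finset.prod_const_one, mul_one]
    rw [Finset.sum_congr rfl fun η _ => hinner η]
    exact hsum_tq
  -- Step 1 : finJoinEnt P ≤ ∑ negMulLog p
  have hsplit : ∀ ω η : J → ι, (⋂ i : J, g i ⁻¹' P (ω i)) ∩ (⋂ i : J, g i ⁻¹' Q (η i)) =
      ⋂ i : J, g i ⁻¹' (P (ω i) ∩ Q (η i)) := by
    intro ω η
    rw [← Set.iInter_inter_distrib]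
    exact Set.iInter_congr fun i => (Set.preimage_inter).symm
  have step1 : finJoinEnt μ T P f F ≤ ∑ w, Real.negMulLog (p w) := by
    have hPatom : ∀ ω : J → ι, (μ (⋂ i : J, g i ⁻¹' P (ω i))).toReal = ∑ η, p (ω, η) := by
      intro ω
      have := hQJ.sum_toReal_measure_inter μ (hPJ.1 ω)
      rw [← this]
      exact Finset.sum_congr rfl fun η _ => by rw [hpdef]; simp only; rw [← hsplit ω η]
    calc finJoinEnt μ T P f F = ∑ ω : J → ι, Real.negMulLog (∑ η, p (ω, η)) := by
          refine Finset.sum_congr rfl fun ω _ => ?_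
          rw [← hPatom ω]
      _ ≤ ∑ ω : J → ι, ∑ η, Real.negMulLog (p (ω, η)) :=
          Finset.sum_le_sum fun ω _ => negMulLog_sum_le _ _ fun η _ => hp0 _
      _ = ∑ w, Real.negMulLog (p w) :=
          (Fintype.sum_prod_type (f := fun w : (J → ι) × (J → ι) => Real.negMulLog (p w))).symm
  -- Step 2 : Gibbs
  have step2 : ∑ w, Real.negMulLog (p w) ≤ -∑ w, p w * Real.log (q w) :=
    gibbs p q hp0 hq0 hq_zero (by rw [hsum_p, hsum_q])
  -- Step 3 : compute the cross entropy
  have hlogsplit : ∀ w, p w * Real.log (q w) =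
      p w * Real.log (tq w.2) + ∑ i : J, p w * Real.log (r (w.1 i) (w.2 i)) := by
    intro w
    by_cases hpw : p w = 0
    · simp [hpw]
    · have hqw : q w ≠ 0 := fun h => hpw (hq_zero w h)
      have htqne : tq w.2 ≠ 0 := fun h => hqw (by simp [hqdef, h])
      have hprodne : (∏ i : J, r (w.1 i) (w.2 i)) ≠ 0 := fun h => hqw (by simp [hqdef, h])
      have hrne : ∀ i ∈ Finset.univ (α := J), r (w.1 i) (w.2 i) ≠ 0 :=
        Finset.prod_ne_zero_iff.1 hprodne
      simp only [hqdef]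
      rw [Real.log_mul htqne hprodne, Real.log_prod hrne, mul_add, Finset.mul_sum]
  have step3 : -∑ w, p w * Real.log (q w) =
      finJoinEnt μ T Q f F + F.card * condEnt μ P Q := by
    rw [Finset.sum_congr rfl fun w _ => hlogsplit w, Finset.sum_add_distrib]
    -- part A
    have hA : ∑ w : (J → ι) × (J → ι), p w * Real.log (tq w.2) =
        ∑ η : J → ι, tq η * Real.log (tq η) := by
      rw [Fintype.sum_prod_type_right (f := fun w : (J → ι) × (J → ι) => p w * Real.log (tq w.2))]
      dsimp only
      refine Finset.sum_congr rfl fun η _ => ?_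
      rw [← Finset.sum_mul]
      congr 1
      have := hPJ.sum_toReal_measure_inter μ (hQJ.1 η)
      calc ∑ ω : J → ι, p (ω, η)
          = ∑ ω : J → ι, (μ ((⋂ i : J, g i ⁻¹' Q (η i)) ∩ ⋂ i : J, g i ⁻¹' P (ω i))).toReal := by
            refine Finset.sum_congr rfl fun ω _ => ?_
            rw [hpdef]; simp only
            rw [Set.inter_comm, hsplit ω η]
        _ = tq η := this
    have hAeq : -∑ w : (J → ι) × (J → ι), p w * Real.log (tq w.2) = finJoinEnt μ T Q f F := by
      rw [hA, ← Finset.sum_neg_distrib]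
      refine Finset.sum_congr rfl fun η _ => ?_
      rw [Real.negMulLog]; ring
    -- part B
    have hB : ∀ i : J, ∑ w : (J → ι) × (J → ι), p w * Real.log (r (w.1 i) (w.2 i)) =
        ∑ ab : ι × ι, mm ab * Real.log (r ab.1 ab.2) := by
      intro i
      have hfiber : ∀ ab : ι × ι,
          (∑ w : (J → ι) × (J → ι), if (w.1 i, w.2 i) = ab then p w else 0) = mm ab := by
        intro ab
        have hSmeas : MeasurableSet (g i ⁻¹' (P ab.1 ∩ Q ab.2)) := hgm i (hmeasPQ ab)
        have hsum := hRJ.sum_toReal_measure_inter μ hSmeas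
        have hterm : ∀ w : (J → ι) × (J → ι),
            (μ ((g i ⁻¹' (P ab.1 ∩ Q ab.2)) ∩ ⋂ j : J, g j ⁻¹' (P (w.1 j) ∩ Q (w.2 j)))).toReal
              = if (w.1 i, w.2 i) = ab then p w else 0 := by
          intro w
          by_cases hw : (w.1 i, w.2 i) = ab
          · rw [if_pos hw]
            have hsub : (⋂ j : J, g j ⁻¹' (P (w.1 j) ∩ Q (w.2 j))) ⊆
                g i ⁻¹' (P ab.1 ∩ Q ab.2) := by
              rw [← hw]
              exact Set.iInter_subset _ i
            rw [Set.inter_eq_self_of_subset_right hsub]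
          · rw [if_neg hw]
            have hdisj : Disjoint (g i ⁻¹' (P (w.1 i) ∩ Q (w.2 i)))
                (g i ⁻¹' (P ab.1 ∩ Q ab.2)) := (hRR i).2.1 hw
            have hsub : (⋂ j : J, g j ⁻¹' (P (w.1 j) ∩ Q (w.2 j))) ⊆
                g i ⁻¹' (P (w.1 i) ∩ Q (w.2 i)) := Set.iInter_subset _ i
            have hempty : (g i ⁻¹' (P ab.1 ∩ Q ab.2)) ∩
                (⋂ j : J, g j ⁻¹' (P (w.1 j) ∩ Q (w.2 j))) = ∅ := by
              rw [Set.inter_comm]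
              exact Set.disjoint_iff_inter_eq_empty.1 (hdisj.mono_left hsub)
            rw [hempty]
            simp
        rw [Finset.sum_congr rfl fun w _ => (hterm w).symm, hsum, hm_eq i ab]
      calc ∑ w : (J → ι) × (J → ι), p w * Real.log (r (w.1 i) (w.2 i))
          = ∑ w : (J → ι) × (J → ι), ∑ ab : ι × ι,
              (if (w.1 i, w.2 i) = ab then p w else 0) * Real.log (r ab.1 ab.2) := by
            refine Finset.sum_congr rfl fun w _ => ?_
            rw [Finset.sum_congr rfl fun ab (_ : ab ∈ Finset.univ) =>
              (ite_zero_mul ((w.1 i, w.2 i) = ab) (p w) (Real.log (r ab.1 ab.2)))]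
            rw [Finset.sum_ite_eq]
            simp
        _ = ∑ ab : ι × ι, ∑ w : (J → ι) × (J → ι),
              (if (w.1 i, w.2 i) = ab then p w else 0) * Real.log (r ab.1 ab.2) :=
            Finset.sum_comm
        _ = ∑ ab : ι × ι, mm ab * Real.log (r ab.1 ab.2) := by
            refine Finset.sum_congr rfl fun ab _ => ?_
            rw [← Finset.sum_mul, hfiber ab]
    have hBeq : -∑ ab : ι × ι, mm ab * Real.log (r ab.1 ab.2) = condEnt μ P Q := by
      have hterm : ∀ ab : ι × ι, -(mm ab * Real.log (r ab.1 ab.2)) =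
          Real.negMulLog (mm ab) + mm ab * Real.log (tb ab.2) := by
        intro ab
        by_cases htb0 : tb ab.2 = 0
        · have hmm0 : mm ab = 0 := by
            have h1 : μ (Q ab.2) = 0 := by
              have := htb0
              rw [htbdef] at this
              simp only at this
              exact (ENNReal.toReal_eq_zero_iff _).1 this |>.resolve_right (measure_ne_top μ _)
            have h2 : μ (P ab.1 ∩ Q ab.2) = 0 :=
              measure_mono_null Set.inter_subset_right h1
            rw [hmmdef]; simp only [h2, ENNReal.toReal_zero]
          rw [hmm0, htb0]
          simp [Real.negMulLog]
        · rw [hrdef]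
          simp only [if_neg htb0]
          by_cases hmm0 : mm ab = 0
          · rw [hmm0]; simp [Real.negMulLog]
          · rw [Real.log_div hmm0 htb0, Real.negMulLog]
            ring
      rw [← Finset.sum_neg_distrib, Finset.sum_congr rfl fun ab _ => hterm ab,
        Finset.sum_add_distrib]
      have h1 : ∑ ab : ι × ι, mm ab * Real.log (tb ab.2) = ∑ b : ι, tb b * Real.log (tb b) := by
        rw [Fintype.sum_prod_type_right (f := fun ab : ι × ι => mm ab * Real.log (tb ab.2))]
        dsimp only
        refine Finset.sum_congr rfl fun b _ => ?_
        rw [← Finset.sum_mul, hmm_sum b]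
      rw [h1, condEnt]
      have h2 : ∑ ab : ι × ι, Real.negMulLog (mm ab) =
          ∑ a : ι, ∑ b : ι, Real.negMulLog (μ (P a ∩ Q b)).toReal := by
        rw [Fintype.sum_prod_type]
      have h3 : ∑ b : ι, tb b * Real.log (tb b) = -∑ b : ι, Real.negMulLog (μ (Q b)).toReal := by
        rw [← Finset.sum_neg_distrib]
        refine Finset.sum_congr rfl fun b _ => ?_
        rw [Real.negMulLog, htbdef]
        ring
      rw [h2, h3]
      ring
    rw [neg_add, hAeq]
    congr 1
    have hcomm : ∑ w : (J → ι) × (J → ι), ∑ i : J, p w * Real.log (r (w.1 i) (w.2 i)) =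
        ∑ i : J, ∑ w : (J → ι) × (J → ι), p w * Real.log (r (w.1 i) (w.2 i)) :=
      Finset.sum_comm
    rw [hcomm]
    have hcard : (Finset.univ : Finset J).card = F.card := by
      rw [Finset.card_univ]; exact Fintype.card_coe F
    calc -∑ i : J, ∑ w : (J → ι) × (J → ι), p w * Real.log (r (w.1 i) (w.2 i))
        = ∑ i : J, -∑ ab : ι × ι, mm ab * Real.log (r ab.1 ab.2) := by
          rw [← Finset.sum_neg_distrib]
          exact Finset.sum_congr rfl fun i _ => by rw [hB i]
      _ = ∑ i : J, condEnt μ P Q := Finset.sum_congr rfl fun i _ => hBeq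
      _ = F.card * condEnt μ P Q := by
          rw [Finset.sum_const, hcard, nsmul_eq_mul]
  calc finJoinEnt μ T P f F ≤ -∑ w, p w * Real.log (q w) := step1.trans step2
    _ = finJoinEnt μ T Q f F + F.card * condEnt μ P Q := step3

end Aux5
end EntDim
namespace EntDim
section Aux6
variable {X : Type*} [MeasurableSpace X]

lemma seqJoinEnt_nonneg {ι : Type*} [Fintype ι] (μ : Measure X) [IsProbabilityMeasure μ]
    (T : X → X) (P : ι → Set X) (s : ℕ → ℕ) (n : ℕ) : 0 ≤ seqJoinEnt μ T P s n := by
  refine Finset.sum_nonneg fun ω _ => Real.negMulLog_nonneg ENNReal.toReal_nonneg ?_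
  calc (μ _).toReal ≤ (1 : ℝ≥0∞).toReal := ENNReal.toReal_mono ENNReal.one_ne_top prob_le_one
    _ = 1 := ENNReal.toReal_one

lemma seqJoinEnt_le {ι : Type*} [Fintype ι] (μ : Measure X) [IsProbabilityMeasure μ]
    {T : X → X} (hT : MeasurePreserving T μ μ) {P : ι → Set X} (hP : IsPartition P)
    (s : ℕ → ℕ) (n : ℕ) :
    seqJoinEnt μ T P s n ≤ n * Real.log (Fintype.card ι) := by
  classical
  have hι : Nonempty ι := hP.nonempty_index μ
  set F := Finset.range n
  set J := {x // x ∈ F}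
  set g : J → X → X := fun i => T^[s i.1] with hgdef
  have hgm : ∀ i : J, Measurable (g i) := fun i => (hT.iterate (s i.1)).measurable
  have hPP : ∀ i : J, IsPartition fun a : ι => g i ⁻¹' P a := fun i => hP.preimage (hgm i)
  have hPJ : IsPartition fun ω : J → ι => ⋂ i : J, g i ⁻¹' P (ω i) := IsPartition.pi hPP
  set p : (J → ι) → ℝ := fun ω => (μ (⋂ i : J, g i ⁻¹' P (ω i))).toReal with hpdef
  have hsum_p : ∑ ω, p ω = 1 := by
    have := hPJ.sum_toReal_measure_inter μ MeasurableSet.univ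
    simp only [Set.univ_inter, measure_univ, ENNReal.toReal_one] at this
    exact this
  set N := Fintype.card (J → ι) with hNdef
  have hN1 : 1 ≤ N := Fintype.card_pos
  have hNpos : (0 : ℝ) < (N : ℝ) := by exact_mod_cast hN1
  have hgibbs := gibbs p (fun _ => (N : ℝ)⁻¹) (fun ω => ENNReal.toReal_nonneg)
    (fun _ => by positivity) (fun _ h => absurd h (by positivity))
    (by rw [hsum_p, Finset.sum_const, Finset.card_univ, nsmul_eq_mul]
        rw [mul_inv_cancel₀ hNpos.ne'])
  have hEnt : seqJoinEnt μ T P s n = ∑ ω, Real.negMulLog (p ω) := rfl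
  have hRHS : -∑ ω, p ω * Real.log ((N : ℝ)⁻¹) = Real.log N := by
    rw [← Finset.sum_mul, hsum_p, one_mul, Real.log_inv, neg_neg]
  have hcard : (N : ℝ) = (Fintype.card ι : ℝ) ^ n := by
    rw [hNdef, Fintype.card_fun, Fintype.card_coe, Finset.card_range]
    push_cast
    ring
  calc seqJoinEnt μ T P s n = ∑ ω, Real.negMulLog (p ω) := hEnt
    _ ≤ -∑ ω, p ω * Real.log ((N : ℝ)⁻¹) := hgibbs
    _ = Real.log N := hRHS
    _ = n * Real.log (Fintype.card ι) := by rw [hcard, Real.log_pow]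

lemma isEntGenSeq_of_condEnt_lt {ι : Type*} [Fintype ι] (μ : Measure X)
    [IsProbabilityMeasure μ] {T : X → X} (hT : MeasurePreserving T μ μ)
    {P Q : ι → Set X} (hP : IsPartition P) (hQ : IsPartition Q) {s : ℕ → ℕ}
    (hs : IsEntGenSeq μ T P s)
    (hce : condEnt μ P Q <
      (Filter.atTop.liminf fun n : ℕ => seqJoinEnt μ T P s n / n) / 4) :
    IsEntGenSeq μ T Q s := by
  set L := Filter.atTop.liminf fun n : ℕ => seqJoinEnt μ T P s n / n with hLdef
  have hL0 : 0 < L := hs.2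
  set B := Real.log (Fintype.card ι) with hB
  have hbP : ∀ᶠ n : ℕ in Filter.atTop, seqJoinEnt μ T P s n / n ≤ B := by
    filter_upwards [Filter.eventually_ge_atTop 1] with n hn
    have h1 := seqJoinEnt_le μ hT hP s n
    have hn0 : (0:ℝ) < n := by exact_mod_cast hn
    rw [div_le_iff₀ hn0]
    calc seqJoinEnt μ T P s n ≤ n * B := h1
      _ = B * n := mul_comm _ _
  have hbQ : ∀ᶠ n : ℕ in Filter.atTop, seqJoinEnt μ T Q s n / n ≤ B := by
    filter_upwards [Filter.eventually_ge_atTop 1] with n hn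
    have h1 := seqJoinEnt_le μ hT hQ s n
    have hn0 : (0:ℝ) < n := by exact_mod_cast hn
    rw [div_le_iff₀ hn0]
    calc seqJoinEnt μ T Q s n ≤ n * B := h1
      _ = B * n := mul_comm _ _
  have hboundP : Filter.IsBoundedUnder (· ≤ ·) Filter.atTop
      (fun n : ℕ => seqJoinEnt μ T P s n / n) := ⟨B, by simpa [Filter.eventually_map] using hbP⟩
  have hboundQ : Filter.IsBoundedUnder (· ≤ ·) Filter.atTop
      (fun n : ℕ => seqJoinEnt μ T Q s n / n) := ⟨B, by simpa [Filter.eventually_map] using hbQ⟩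
  have hlbP : Filter.IsBoundedUnder (· ≥ ·) Filter.atTop
      (fun n : ℕ => seqJoinEnt μ T P s n / n) := by
    refine ⟨0, ?_⟩
    simp only [Filter.eventually_map]
    filter_upwards with n
    exact div_nonneg (seqJoinEnt_nonneg μ T P s n) (Nat.cast_nonneg n)
  have hcobQ := hboundQ.isCoboundedUnder_ge
  have hev1 : ∀ᶠ n : ℕ in Filter.atTop, L / 2 < seqJoinEnt μ T P s n / n :=
    Filter.eventually_lt_of_lt_liminf (by linarith) hlbP
  have hev : ∀ᶠ n : ℕ in Filter.atTop, L / 4 ≤ seqJoinEnt μ T Q s n / n := by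
    filter_upwards [hev1, Filter.eventually_ge_atTop 1] with n h1 h2
    have hn0 : (0:ℝ) < n := by exact_mod_cast h2
    have hkey := finJoinEnt_le_add μ hT hP hQ s (Finset.range n)
    rw [Finset.card_range] at hkey
    have hdiv : seqJoinEnt μ T P s n / n ≤ seqJoinEnt μ T Q s n / n + condEnt μ P Q := by
      have h3 : seqJoinEnt μ T P s n / n ≤ (seqJoinEnt μ T Q s n + n * condEnt μ P Q) / n :=
        (div_le_div_iff_of_pos_right hn0).mpr hkey
      rwa [add_div, mul_div_cancel_left₀ _ hn0.ne'] at h3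
    linarith
  refine ⟨hs.1, lt_of_lt_of_le (by linarith : (0:ℝ) < L / 4) (Filter.le_liminf_of_le hcobQ hev)⟩

end Aux6
end EntDim
namespace EntDim

/-- The upper and lower entropy dimensions of a partition are lower
semicontinuous in the partition: for every `ε > 0` there is `δ > 0` such that any
partition `β` (with the same index set) with `∑ i, μ(B_i Δ A_i) < δ` satisfies
`D̄_μ(T,β) > D̄_μ(T,α) - ε` and `D̲_μ(T,β) > D̲_μ(T,α) - ε`. -/
theorem entDimPart_semicontinuous {X : Type*} [MeasurableSpace X]
    (μ : Measure X) [IsProbabilityMeasure μ] (T : X → X) (hT : MeasurePreserving T μ μ)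
    {ι : Type*} [Fintype ι] (P : ι → Set X) (hP : IsPartition P)
    (ε : ℝ) (hε : 0 < ε) :
    ∃ δ : ℝ, 0 < δ ∧ ∀ Q : ι → Set X, IsPartition Q →
      (∑ i, (μ (Q i ∆ P i)).toReal) < δ →
      upperEntDimPart μ T P - ε < upperEntDimPart μ T Q ∧
      lowerEntDimPart μ T P - ε < lowerEntDimPart μ T Q := by
  classical
  by_cases hex : ∃ s : ℕ → ℕ, IsEntGenSeq μ T P s
  · -- there is an entropy generating sequence: pick near-optimal sequences
    obtain ⟨s₀, hs₀⟩ := hex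
    have hne1 : Set.Nonempty {d : ℝ | ∃ s : ℕ → ℕ, IsEntGenSeq μ T P s ∧ d = upperDim s} :=
      ⟨upperDim s₀, s₀, hs₀, rfl⟩
    have hne2 : Set.Nonempty {d : ℝ | ∃ s : ℕ → ℕ, IsEntGenSeq μ T P s ∧ d = lowerDim s} :=
      ⟨lowerDim s₀, s₀, hs₀, rfl⟩
    obtain ⟨d₁, hd₁mem, hd₁⟩ := exists_lt_of_lt_csSup hne1
      (show upperEntDimPart μ T P - ε < sSup _ from sub_lt_self _ hε)
    obtain ⟨s₁, hs₁, rfl⟩ := hd₁mem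
    obtain ⟨d₂, hd₂mem, hd₂⟩ := exists_lt_of_lt_csSup hne2
      (show lowerEntDimPart μ T P - ε < sSup _ from sub_lt_self _ hε)
    obtain ⟨s₂, hs₂, rfl⟩ := hd₂mem
    set L₁ := Filter.atTop.liminf fun n : ℕ => seqJoinEnt μ T P s₁ n / n with hL₁
    set L₂ := Filter.atTop.liminf fun n : ℕ => seqJoinEnt μ T P s₂ n / n with hL₂
    have hL₁0 : 0 < L₁ := hs₁.2
    have hL₂0 : 0 < L₂ := hs₂.2
    have hc : 0 < min (L₁ / 4) (L₂ / 4) := lt_min (by linarith) (by linarith)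
    obtain ⟨δ, hδ, hδsmall⟩ := condEnt_small μ hP hc
    refine ⟨δ, hδ, fun Q hQ hclose => ?_⟩
    have hce := hδsmall Q hQ hclose
    have hgen1 : IsEntGenSeq μ T Q s₁ :=
      isEntGenSeq_of_condEnt_lt μ hT hP hQ hs₁ (lt_of_lt_of_le hce (min_le_left _ _))
    have hgen2 : IsEntGenSeq μ T Q s₂ :=
      isEntGenSeq_of_condEnt_lt μ hT hP hQ hs₂ (lt_of_lt_of_le hce (min_le_right _ _))
    have hbddQ1 : BddAbove {d : ℝ | ∃ s : ℕ → ℕ, IsEntGenSeq μ T Q s ∧ d = upperDim s} :=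
      ⟨2, fun d ⟨s, hs, hd⟩ => hd ▸ upperDim_le_two hs.1⟩
    have hbddQ2 : BddAbove {d : ℝ | ∃ s : ℕ → ℕ, IsEntGenSeq μ T Q s ∧ d = lowerDim s} :=
      ⟨2, fun d ⟨s, hs, hd⟩ => hd ▸ lowerDim_le_two hs.1⟩
    constructor
    · exact lt_of_lt_of_le hd₁ (le_csSup hbddQ1 ⟨s₁, hgen1, rfl⟩)
    · exact lt_of_lt_of_le hd₂ (le_csSup hbddQ2 ⟨s₂, hgen2, rfl⟩)
  · -- no entropy generating sequence: both dimensions of `P` vanish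
    refine ⟨1, one_pos, fun Q hQ _ => ?_⟩
    have hPe1 : {d : ℝ | ∃ s : ℕ → ℕ, IsEntGenSeq μ T P s ∧ d = upperDim s} = ∅ := by
      ext d; simp only [Set.mem_setOf_eq, Set.mem_empty_iff_false, iff_false]
      rintro ⟨s, hs, -⟩; exact hex ⟨s, hs⟩
    have hPe2 : {d : ℝ | ∃ s : ℕ → ℕ, IsEntGenSeq μ T P s ∧ d = lowerDim s} = ∅ := by
      ext d; simp only [Set.mem_setOf_eq, Set.mem_empty_iff_false, iff_false]
      rintro ⟨s, hs, -⟩; exact hex ⟨s, hs⟩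
    have h1 : upperEntDimPart μ T P = 0 := by
      rw [upperEntDimPart, hPe1, Real.sSup_empty]
    have h2 : lowerEntDimPart μ T P = 0 := by
      rw [lowerEntDimPart, hPe2, Real.sSup_empty]
    have h3 : 0 ≤ upperEntDimPart μ T Q :=
      Real.sSup_nonneg fun d ⟨s, _, hd⟩ => hd ▸ upperDim_nonneg s
    have h4 : 0 ≤ lowerEntDimPart μ T Q :=
      Real.sSup_nonneg fun d ⟨s, _, hd⟩ => hd ▸ lowerDim_nonneg s
    constructor
    · rw [h1]; linarith
    · rw [h2]; linarith

end EntDim
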